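/- The lower bound −1 of the normalized graph-level CFH is tight as an infimum: for every ε > 0 there exists a finite simple graph G without isolated nodes, together with node features and class labels, such that h̃^(G) < −1 + ε; hence the infimum of h̃^(G) over all such graphs equals −1. -/

import Mathlib

open Finset

/-- The class-controlled feature `(X_i | Y)` of node `i`: its feature minus the mean
feature of the nodes of its class. -/
noncomputable def ccf {V : Type*} [Fintype V] [DecidableEq V] {k c : ℕ}
    (X : V → EuclideanSpace ℝ (Fin k)) (Y : V → Fin c) (i : V) :
    EuclideanSpace ℝ (Fin k) :=
  X i - ((Finset.univ.filter fun j => Y j = Y i).card : ℝ)⁻¹ •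
    ∑ j ∈ Finset.univ.filter fun j => Y j = Y i, X j

/-- `d(v_i, V')`: mean Euclidean distance between the class-controlled feature of `i`
and those of the nodes in `S`. -/
noncomputable def dFun {V : Type*} [Fintype V] [DecidableEq V] {k c : ℕ}
    (X : V → EuclideanSpace ℝ (Fin k)) (Y : V → Fin c) (i : V) (S : Finset V) : ℝ :=
  (S.card : ℝ)⁻¹ * ∑ j ∈ S, ‖ccf X Y i - ccf X Y j‖

/-- The homophily baseline `b(v_i) = d(v_i, V \ {v_i})`. -/
noncomputable def bFun {V : Type*} [Fintype V] [DecidableEq V] {k c : ℕ}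
    (X : V → EuclideanSpace ℝ (Fin k)) (Y : V → Fin c) (i : V) : ℝ :=
  dFun X Y i (Finset.univ.erase i)

open scoped Classical in
/-- The neighbor finset `N_i` of node `i` in the graph `G`. -/
noncomputable def nbr {V : Type*} [Fintype V] (G : SimpleGraph V) (i : V) : Finset V :=
  Finset.univ.filter fun j => G.Adj i j

/-- `d(v_i, N_i)`: mean distance from `i` to its neighbors. -/
noncomputable def dN {V : Type*} [Fintype V] [DecidableEq V] {k c : ℕ}
    (G : SimpleGraph V) (X : V → EuclideanSpace ℝ (Fin k)) (Y : V → Fin c) (i : V) : ℝ :=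
  dFun X Y i (nbr G i)

/-- Unnormalized node-level CFH `h^(v)_i = b(v_i) - d(v_i, N_i)`. -/
noncomputable def hv {V : Type*} [Fintype V] [DecidableEq V] {k c : ℕ}
    (G : SimpleGraph V) (X : V → EuclideanSpace ℝ (Fin k)) (Y : V → Fin c) (i : V) : ℝ :=
  bFun X Y i - dN G X Y i

/-- Normalized node-level CFH `h̃^(v)_i = h^(v)_i / max(b(v_i), d(v_i, N_i))`
(equal to `0` when the denominator vanishes, by the convention `x / 0 = 0`). -/
noncomputable def hvNorm {V : Type*} [Fintype V] [DecidableEq V] {k c : ℕ}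
    (G : SimpleGraph V) (X : V → EuclideanSpace ℝ (Fin k)) (Y : V → Fin c) (i : V) : ℝ :=
  hv G X Y i / max (bFun X Y i) (dN G X Y i)

/-- Unnormalized graph-level CFH `h^(G)`, the mean of the node-level CFH values. -/
noncomputable def hG {V : Type*} [Fintype V] [DecidableEq V] {k c : ℕ}
    (G : SimpleGraph V) (X : V → EuclideanSpace ℝ (Fin k)) (Y : V → Fin c) : ℝ :=
  (Fintype.card V : ℝ)⁻¹ * ∑ i, hv G X Y i

/-- Normalized graph-level CFH
`h̃^(G) = h^(G) / ((1/|V|) max(Σ_i b(v_i), Σ_i d(v_i, N_i)))`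
(equal to `0` when the denominator vanishes, by the convention `x / 0 = 0`). -/
noncomputable def hGNorm {V : Type*} [Fintype V] [DecidableEq V] {k c : ℕ}
    (G : SimpleGraph V) (X : V → EuclideanSpace ℝ (Fin k)) (Y : V → Fin c) : ℝ :=
  hG G X Y /
    ((Fintype.card V : ℝ)⁻¹ * max (∑ i, bFun X Y i) (∑ i, dN G X Y i))


/-! ### Auxiliary construction and lemmas -/

section AuxCFH

lemma sum_ite01 {n : ℕ} (hn : 2 ≤ n) (A B C : ℝ) :
    ∑ j : Fin n, (if (j:ℕ) = 0 then A else if (j:ℕ) = 1 then B else C)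
      = A + B + ((n:ℝ) - 2) * C := by
  have h0 : (0:ℕ) < n := by omega
  have h1 : (1:ℕ) < n := by omega
  set z : Fin n := ⟨0, h0⟩ with hz
  set o : Fin n := ⟨1, h1⟩ with ho
  have key : ∀ j : Fin n, (if (j:ℕ) = 0 then A else if (j:ℕ) = 1 then B else C)
      = C + ((if j = z then A - C else 0) + (if j = o then B - C else 0)) := by
    intro j
    by_cases e0 : (j:ℕ) = 0
    · have : j = z := by apply Fin.ext; simpa using e0
      subst this
      simp [hz, ho, Fin.ext_iff]
    · by_cases e1 : (j:ℕ) = 1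
      · have : j = o := by apply Fin.ext; simpa using e1
        subst this
        simp [hz, ho, Fin.ext_iff, e0]
      · simp [Fin.ext_iff, hz, ho, e0, e1]
  rw [Finset.sum_congr rfl fun j _ => key j]
  rw [Finset.sum_add_distrib, Finset.sum_add_distrib, Finset.sum_const,
    Finset.sum_ite_eq' Finset.univ z, Finset.sum_ite_eq' Finset.univ o]
  simp
  ring

def xval {n : ℕ} (i : Fin n) : ℝ := if (i:ℕ) = 0 then 1 else if (i:ℕ) = 1 then -1 else 0

noncomputable def Xc (n : ℕ) : Fin n → EuclideanSpace ℝ (Fin 1) := fun i => WithLp.toLp 2 (fun _ => xval i)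

def Yc (n : ℕ) : Fin n → Fin 1 := fun _ => 0

def Gc (n : ℕ) : SimpleGraph (Fin n) where
  Adj i j := ¬(((i:ℕ) < 2) ↔ ((j:ℕ) < 2))
  symm := ⟨fun (i j : Fin n) (h : ¬(((i:ℕ) < 2) ↔ ((j:ℕ) < 2))) hh => h hh.symm⟩
  loopless := ⟨fun i (h : ¬(((i:ℕ) < 2) ↔ ((i:ℕ) < 2))) => h Iff.rfl⟩

lemma ccf_sub (n : ℕ) (i j : Fin n) :
    ccf (Xc n) (Yc n) i - ccf (Xc n) (Yc n) j = Xc n i - Xc n j := by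
  unfold ccf
  have h : ∀ i : Fin n, (Finset.univ.filter fun j => Yc n j = Yc n i) = Finset.univ := by
    intro i
    apply Finset.filter_true_of_mem
    intro j _
    exact Subsingleton.elim _ _
  rw [h i, h j]
  abel

lemma norm_ccf_sub (n : ℕ) (i j : Fin n) :
    ‖ccf (Xc n) (Yc n) i - ccf (Xc n) (Yc n) j‖ = |xval i - xval j| := by
  rw [ccf_sub]
  have h2 : (Xc n i - Xc n j) 0 = xval i - xval j := rfl
  rw [show ‖Xc n i - Xc n j‖ = |(Xc n i - Xc n j) 0| from by
    simp [EuclideanSpace.norm_eq, Real.sqrt_sq_eq_abs], h2]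

lemma adj_dist {n : ℕ} (i j : Fin n) (h : (Gc n).Adj i j) : |xval i - xval j| = 1 := by
  have h' : ¬(((i:ℕ) < 2) ↔ ((j:ℕ) < 2)) := h
  unfold xval
  by_cases hi : (i:ℕ) < 2
  · have hj : ¬ (j:ℕ) < 2 := fun hj => h' ⟨fun _ => hj, fun _ => hi⟩
    have hj0 : ¬(j:ℕ) = 0 := by omega
    have hj1 : ¬(j:ℕ) = 1 := by omega
    rcases (by omega : (i:ℕ) = 0 ∨ (i:ℕ) = 1) with hi' | hi' <;>
      simp [hi', hj0, hj1]
  · have hj : (j:ℕ) < 2 := by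
      by_contra hj; exact h' ⟨fun hh => absurd hh hi, fun hh => absurd hh hj⟩
    have hi0 : ¬(i:ℕ) = 0 := by omega
    have hi1 : ¬(i:ℕ) = 1 := by omega
    rcases (by omega : (j:ℕ) = 0 ∨ (j:ℕ) = 1) with hj' | hj' <;>
      simp [hj', hi0, hi1]

lemma nbr_nonempty (n : ℕ) (hn : 4 ≤ n) (i : Fin n) : (nbr (Gc n) i).Nonempty := by
  by_cases hi : (i:ℕ) < 2
  · refine ⟨⟨2, by omega⟩, ?_⟩
    simp only [nbr, Finset.mem_filter, Finset.mem_univ, true_and]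
    show ¬(((i:ℕ) < 2) ↔ _)
    simp [hi]
  · refine ⟨⟨0, by omega⟩, ?_⟩
    simp only [nbr, Finset.mem_filter, Finset.mem_univ, true_and]
    show ¬(((i:ℕ) < 2) ↔ _)
    simp [hi, Nat.zero_lt_two]

lemma dN_eq (n : ℕ) (hn : 4 ≤ n) (i : Fin n) : dN (Gc n) (Xc n) (Yc n) i = 1 := by
  unfold dN dFun
  have key : ∀ j ∈ nbr (Gc n) i, ‖ccf (Xc n) (Yc n) i - ccf (Xc n) (Yc n) j‖ = 1 := by
    intro j hj
    rw [norm_ccf_sub]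
    refine adj_dist i j ?_
    simpa [nbr] using hj
  rw [Finset.sum_congr rfl key, Finset.sum_const, nsmul_eq_mul, mul_one, inv_mul_cancel₀]
  exact Nat.cast_ne_zero.mpr (Finset.card_pos.mpr (nbr_nonempty n hn i)).ne'

lemma bFun_eq (n : ℕ) (hn : 4 ≤ n) (i : Fin n) :
    bFun (Xc n) (Yc n) i
      = ((n:ℝ) - 1)⁻¹ * (|xval i - 1| + |xval i + 1| + ((n:ℝ) - 2) * |xval i|) := by
  unfold bFun dFun
  have hc : (((Finset.univ.erase i).card : ℕ) : ℝ) = (n:ℝ) - 1 := by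
    rw [Finset.card_erase_of_mem (Finset.mem_univ i)]
    rw [Finset.card_univ, Fintype.card_fin, Nat.cast_sub (by omega)]
    norm_num
  rw [hc]
  congr 1
  have hz : ‖ccf (Xc n) (Yc n) i - ccf (Xc n) (Yc n) i‖ = 0 := by simp
  rw [Finset.sum_erase_eq_sub (Finset.mem_univ i), hz, sub_zero]
  rw [Finset.sum_congr rfl (fun j _ => norm_ccf_sub n i j)]
  rw [show (∑ j : Fin n, |xval i - xval j|)
      = ∑ j : Fin n, (if (j:ℕ) = 0 then |xval i - 1| else if (j:ℕ) = 1 then |xval i + 1|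
          else |xval i|) from Finset.sum_congr rfl (fun j _ => by
        by_cases h0 : (j:ℕ) = 0
        · rw [show xval j = 1 from by simp [xval, h0], if_pos h0]
        · by_cases h1 : (j:ℕ) = 1
          · rw [show xval j = -1 from by simp [xval, h0, h1], if_neg h0, if_pos h1,
              sub_neg_eq_add]
          · rw [show xval j = 0 from by simp [xval, h0, h1], if_neg h0, if_neg h1,
              sub_zero])]
  rw [sum_ite01 (by omega)]

lemma sum_bFun (n : ℕ) (hn : 4 ≤ n) : ∑ i, bFun (Xc n) (Yc n) i = 4 := by
  rw [Finset.sum_congr rfl (fun i _ => bFun_eq n hn i), ← Finset.mul_sum]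
  have key : ∑ i : Fin n, (|xval i - 1| + |xval i + 1| + ((n:ℝ) - 2) * |xval i|)
      = ∑ i : Fin n, (if (i:ℕ) = 0 then (n:ℝ) else if (i:ℕ) = 1 then (n:ℝ) else 2) := by
    refine Finset.sum_congr rfl (fun i _ => ?_)
    by_cases h0 : (i:ℕ) = 0
    · rw [show xval i = 1 from by simp [xval, h0], if_pos h0]
      norm_num
    · by_cases h1 : (i:ℕ) = 1
      · rw [show xval i = -1 from by simp [xval, h0, h1], if_neg h0, if_pos h1]
        norm_num
      · rw [show xval i = 0 from by simp [xval, h0, h1], if_neg h0, if_neg h1]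
        norm_num
  rw [key, sum_ite01 (by omega)]
  have hn4 : (4:ℝ) ≤ (n:ℝ) := by exact_mod_cast hn
  have h1 : (n:ℝ) - 1 ≠ 0 := by linarith
  field_simp
  ring

lemma hGNorm_eq (n : ℕ) (hn : 4 ≤ n) :
    hGNorm (Gc n) (Xc n) (Yc n) = 4 / (n:ℝ) - 1 := by
  have hn0 : (0:ℝ) < (n:ℝ) := by
    have : (4:ℝ) ≤ (n:ℝ) := by exact_mod_cast hn
    linarith
  have hsd : ∑ i, dN (Gc n) (Xc n) (Yc n) i = (n:ℝ) := by
    rw [Finset.sum_congr rfl (fun i _ => dN_eq n hn i), Finset.sum_const,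
      Finset.card_univ, Fintype.card_fin, nsmul_eq_mul, mul_one]
  have hsb := sum_bFun n hn
  have hmax : max (∑ i, bFun (Xc n) (Yc n) i) (∑ i, dN (Gc n) (Xc n) (Yc n) i) = (n:ℝ) := by
    rw [hsb, hsd]
    exact max_eq_right (by exact_mod_cast hn)
  have hhv : ∑ i, hv (Gc n) (Xc n) (Yc n) i = 4 - (n:ℝ) := by
    unfold hv
    rw [Finset.sum_sub_distrib, hsb, hsd]
  unfold hGNorm hG
  rw [hhv, hmax, Fintype.card_fin]
  field_simp

lemma hGNorm_ge_neg_one {V : Type*} [Fintype V] [DecidableEq V] {k c : ℕ}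
    (G : SimpleGraph V) (X : V → EuclideanSpace ℝ (Fin k)) (Y : V → Fin c) :
    -1 ≤ hGNorm G X Y := by
  have hb : ∀ i, 0 ≤ bFun X Y i := fun i => by
    unfold bFun dFun
    positivity
  have hd : ∀ i, 0 ≤ dN G X Y i := fun i => by
    unfold dN dFun
    positivity
  have hsb : 0 ≤ ∑ i, bFun X Y i := Finset.sum_nonneg fun i _ => hb i
  have hsd : 0 ≤ ∑ i, dN G X Y i := Finset.sum_nonneg fun i _ => hd i
  set B := ∑ i, bFun X Y i
  set Dd := ∑ i, dN G X Y i
  set cV := ((Fintype.card V : ℝ))⁻¹ with hcV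
  have hcV0 : 0 ≤ cV := by positivity
  have hM : Dd ≤ max B Dd := le_max_right _ _
  have hM0 : 0 ≤ max B Dd := le_trans hsd hM
  have hhG : hG G X Y = cV * (B - Dd) := by
    unfold hG hv
    rw [Finset.sum_sub_distrib]
  unfold hGNorm
  rcases eq_or_lt_of_le (mul_nonneg hcV0 hM0) with h | h
  · rw [← hcV, ← h, div_zero]
    norm_num
  · rw [← hcV, le_div_iff₀ h, hhG]
    nlinarith [mul_nonneg hcV0 hsb, mul_le_mul_of_nonneg_left hM hcV0]

end AuxCFH

/-- Lemma 3.1, tightness of the lower bound. For every `ε > 0` there is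
a finite simple graph without isolated nodes, with node features and class labels, whose
normalized graph-level CFH is below `-1 + ε`; hence the infimum of the normalized
graph-level CFH over all such graphs equals `-1`. -/
theorem graph_level_CFH_inf_tight :
    (∀ ε : ℝ, 0 < ε →
      ∃ (n k c : ℕ) (G : SimpleGraph (Fin n)) (X : Fin n → EuclideanSpace ℝ (Fin k))
        (Y : Fin n → Fin c),
        (∀ v, (nbr G v).Nonempty) ∧ hGNorm G X Y < -1 + ε) ∧
    sInf {x : ℝ | ∃ (n k c : ℕ) (G : SimpleGraph (Fin n))
        (X : Fin n → EuclideanSpace ℝ (Fin k)) (Y : Fin n → Fin c),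
        (∀ v, (nbr G v).Nonempty) ∧ x = hGNorm G X Y} = -1 := by
  have main : ∀ ε : ℝ, 0 < ε →
      ∃ (n k c : ℕ) (G : SimpleGraph (Fin n)) (X : Fin n → EuclideanSpace ℝ (Fin k))
        (Y : Fin n → Fin c),
        (∀ v, (nbr G v).Nonempty) ∧ hGNorm G X Y < -1 + ε := by
    intro ε hε
    set n : ℕ := ⌈4/ε⌉₊ + 4 with hn
    have hn4 : 4 ≤ n := by omega
    refine ⟨n, 1, 1, Gc n, Xc n, Yc n, nbr_nonempty n hn4, ?_⟩
    rw [hGNorm_eq n hn4]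
    have hn0 : (0:ℝ) < (n:ℝ) := by
      have : 0 < n := by omega
      exact_mod_cast this
    have h1 : 4/ε < (n:ℝ) := by
      calc 4/ε ≤ (⌈4/ε⌉₊ : ℝ) := Nat.le_ceil _
        _ < (n:ℝ) := by rw [hn]; push_cast; linarith
    have h2 : 4 < ε * (n:ℝ) := by
      rw [div_lt_iff₀ hε] at h1
      linarith
    have h3 : 4 / (n:ℝ) < ε := by
      rw [div_lt_iff₀ hn0]
      linarith
    linarith
  refine ⟨main, ?_⟩
  have hlb : ∀ x ∈ {x : ℝ | ∃ (n k c : ℕ) (G : SimpleGraph (Fin n))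
      (X : Fin n → EuclideanSpace ℝ (Fin k)) (Y : Fin n → Fin c),
      (∀ v, (nbr G v).Nonempty) ∧ x = hGNorm G X Y}, -1 ≤ x := by
    rintro x ⟨n, k, c, G, X, Y, -, rfl⟩
    exact hGNorm_ge_neg_one G X Y
  have hbdd : BddBelow {x : ℝ | ∃ (n k c : ℕ) (G : SimpleGraph (Fin n))
      (X : Fin n → EuclideanSpace ℝ (Fin k)) (Y : Fin n → Fin c),
      (∀ v, (nbr G v).Nonempty) ∧ x = hGNorm G X Y} := ⟨-1, hlb⟩
  have hne : Set.Nonempty {x : ℝ | ∃ (n k c : ℕ) (G : SimpleGraph (Fin n))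
      (X : Fin n → EuclideanSpace ℝ (Fin k)) (Y : Fin n → Fin c),
      (∀ v, (nbr G v).Nonempty) ∧ x = hGNorm G X Y} := by
    obtain ⟨n, k, c, G, X, Y, h1, h2⟩ := main 1 one_pos
    exact ⟨hGNorm G X Y, n, k, c, G, X, Y, h1, rfl⟩
  refine le_antisymm ?_ (le_csInf hne hlb)
  apply le_of_forall_pos_le_add
  intro ε hε
  obtain ⟨n, k, c, G, X, Y, h1, h2⟩ := main ε hε
  have hmem : hGNorm G X Y ∈ {x : ℝ | ∃ (n k c : ℕ) (G : SimpleGraph (Fin n))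
      (X : Fin n → EuclideanSpace ℝ (Fin k)) (Y : Fin n → Fin c),
      (∀ v, (nbr G v).Nonempty) ∧ x = hGNorm G X Y} := ⟨n, k, c, G, X, Y, h1, rfl⟩
  calc sInf _ ≤ hGNorm G X Y := csInf_le hbdd hmem
    _ ≤ -1 + ε := le_of_lt h2
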